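/- The quotient 𝔪' = 𝔤/𝔰 by the subalgebra 𝔰 = span{h, e, f} admits no 𝔰-invariant almost complex structure: there is no linear endomorphism K of 𝔪' with K² = −id satisfying K ∘ ρ'(X) = ρ'(X) ∘ K for all X ∈ 𝔰, where ρ'(X)(v + 𝔰) = [X, v] + 𝔰 is the isotropy representation. -/

import Mathlib

noncomputable section

/-- The underlying space of the 9-dimensional Lie algebra `𝔤`; coordinates are taken
with respect to the ordered basis `z, b, x₁, x₂, x₃, x₄, h, e, f`
(so index 0 = z, 1 = b, 2 = x₁, 3 = x₂, 4 = x₃, 5 = x₄, 6 = h, 7 = e, 8 = f). -/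
def G : Type := Fin 9 → ℝ

instance : AddCommGroup G := inferInstanceAs (AddCommGroup (Fin 9 → ℝ))
instance : Module ℝ G := inferInstanceAs (Module ℝ (Fin 9 → ℝ))

@[simp] lemma G.add_apply (u v : G) (k : Fin 9) : (u + v) k = u k + v k := rfl
@[simp] lemma G.smul_apply (c : ℝ) (u : G) (k : Fin 9) : (c • u) k = c * u k := rfl
@[simp] lemma G.zero_apply (k : Fin 9) : (0 : G) k = 0 := rfl

/-- The Lie bracket of `𝔤` determined by `[b,xᵢ] = xᵢ`, `[b,z] = 2z`, `[h,x₁] = −3x₁`,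
`[h,x₂] = −x₂`, `[h,x₃] = x₃`, `[h,x₄] = 3x₄`, `[f,x₂] = −3x₁`, `[f,x₃] = −2x₂`,
`[f,x₄] = −x₃`, `[e,x₁] = x₂`, `[e,x₂] = 2x₃`, `[e,x₃] = 3x₄`, `[x₁,x₄] = z`,
`[x₂,x₃] = −3z`, `[h,f] = −2f`, `[h,e] = 2e`, `[f,e] = h`, all other brackets of
basis elements being zero. -/
def gb (u v : G) : G := fun k =>
  match k with
  | 0 => -2*(u 0*v 1 - u 1*v 0) + (u 2*v 5 - u 5*v 2) - 3*(u 3*v 4 - u 4*v 3)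
  | 1 => 0
  | 2 => (u 1*v 2 - u 2*v 1) + 3*(u 2*v 6 - u 6*v 2) + 3*(u 3*v 8 - u 8*v 3)
  | 3 => (u 1*v 3 - u 3*v 1) - (u 2*v 7 - u 7*v 2) + (u 3*v 6 - u 6*v 3) + 2*(u 4*v 8 - u 8*v 4)
  | 4 => (u 1*v 4 - u 4*v 1) - 2*(u 3*v 7 - u 7*v 3) - (u 4*v 6 - u 6*v 4) + (u 5*v 8 - u 8*v 5)
  | 5 => (u 1*v 5 - u 5*v 1) - 3*(u 4*v 7 - u 7*v 4) - 3*(u 5*v 6 - u 6*v 5)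
  | 6 => -(u 7*v 8 - u 8*v 7)
  | 7 => 2*(u 6*v 7 - u 7*v 6)
  | 8 => -2*(u 6*v 8 - u 8*v 6)

instance : LieRing G where
  bracket := gb
  add_lie := by intro x y z; funext k; fin_cases k <;> simp only [gb, G.add_apply] <;> ring
  lie_add := by intro x y z; funext k; fin_cases k <;> simp only [gb, G.add_apply] <;> ring
  lie_self := by intro x; funext k; fin_cases k <;> simp only [gb, G.zero_apply] <;> ring
  leibniz_lie := by intro x y z; funext k; fin_cases k <;> simp only [gb, G.add_apply] <;> ring

lemma G.lie_def (u v : G) : ⁅u, v⁆ = gb u v := rfl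

instance : LieAlgebra ℝ G where
  lie_smul := by
    intro c x y; funext k
    rw [G.lie_def, G.lie_def]
    fin_cases k <;> simp only [gb, G.smul_apply] <;> ring

/-- basis vector `z` -/ def zv : G := Pi.single 0 1
/-- basis vector `b` -/ def bv : G := Pi.single 1 1
/-- basis vector `x₁` -/ def x1v : G := Pi.single 2 1
/-- basis vector `x₂` -/ def x2v : G := Pi.single 3 1
/-- basis vector `x₃` -/ def x3v : G := Pi.single 4 1
/-- basis vector `x₄` -/ def x4v : G := Pi.single 5 1
/-- basis vector `h` -/ def hv : G := Pi.single 6 1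
/-- basis vector `e` -/ def ev : G := Pi.single 7 1
/-- basis vector `f` -/ def fv : G := Pi.single 8 1


/-- The subalgebra `𝔰 = span{h, e, f}` (as a subspace of `𝔤`). -/
def Ssub : Submodule ℝ G := Submodule.span ℝ {hv, ev, fv}

/-- The quotient map `π : 𝔤 → 𝔪' = 𝔤/𝔰`. -/
def prS : G →ₗ[ℝ] G ⧸ Ssub := Ssub.mkQ

lemma G.sub_apply (u v : G) (k : Fin 9) : (u - v) k = u k - v k := rfl

lemma memS (u : G) : u ∈ Ssub ↔
    (u 0 = 0 ∧ u 1 = 0 ∧ u 2 = 0 ∧ u 3 = 0 ∧ u 4 = 0 ∧ u 5 = 0) := by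
  constructor
  · intro hu
    induction hu using Submodule.span_induction with
    | mem x hx =>
      simp only [Set.mem_insert_iff, Set.mem_singleton_iff] at hx
      rcases hx with h | h | h <;> subst h <;>
        simp [hv, ev, fv, Pi.single_apply]
    | zero => simp
    | add x y hx hy ihx ihy =>
      obtain ⟨a0,a1,a2,a3,a4,a5⟩ := ihx
      obtain ⟨b0,b1,b2,b3,b4,b5⟩ := ihy
      refine ⟨?_,?_,?_,?_,?_,?_⟩ <;> simp [a0,a1,a2,a3,a4,a5,b0,b1,b2,b3,b4,b5]
    | smul c x hx ih =>
      obtain ⟨a0,a1,a2,a3,a4,a5⟩ := ih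
      refine ⟨?_,?_,?_,?_,?_,?_⟩ <;> simp [a0,a1,a2,a3,a4,a5]
  · rintro ⟨h0,h1,h2,h3,h4,h5⟩
    have hrep : u = u 6 • hv + u 7 • ev + u 8 • fv := by
      funext k
      simp only [G.add_apply, G.smul_apply]
      fin_cases k <;>
        simp [hv, ev, fv, Pi.single_apply, h0, h1, h2, h3, h4, h5]
    rw [hrep]
    refine add_mem (add_mem ?_ ?_) ?_ <;>
      exact Submodule.smul_mem _ _ (Submodule.subset_span (by simp))

lemma hv_mem : hv ∈ Ssub := Submodule.subset_span (by simp)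

lemma lie_h_x4 : ⁅hv, x4v⁆ = (3:ℝ) • x4v := by
  funext k
  rw [G.lie_def, G.smul_apply]
  fin_cases k <;> simp [gb, hv, x4v, Pi.single_apply]

/-- The quotient `𝔪' = 𝔤/𝔰` by the subalgebra `𝔰 = span{h, e, f}`
admits no `𝔰`-invariant almost complex structure: there is no linear endomorphism `K`
of `𝔪'` with `K² = −id` commuting with the isotropy representation
`ρ'(X)(v + 𝔰) = [X,v] + 𝔰` for all `X ∈ 𝔰`. -/
theorem stmt12 :
    ¬ ∃ K : Module.End ℝ (G ⧸ Ssub),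
        K ∘ₗ K = -LinearMap.id ∧
        (∀ X ∈ Ssub, ∀ v w : G, K (prS v) = prS w → K (prS ⁅X, v⁆) = prS ⁅X, w⁆) := by
  rintro ⟨K, hK2, hcomm⟩
  -- pick a representative w of K (prS x4v)
  obtain ⟨w, hw⟩ := Ssub.mkQ_surjective (K (prS x4v))
  have hw' : K (prS x4v) = prS w := hw.symm
  have hx4ne : prS x4v ≠ 0 := by
    intro h
    have : x4v ∈ Ssub := (Submodule.Quotient.mk_eq_zero Ssub).mp h
    rcases (memS x4v).mp this with ⟨-,-,-,-,-,h5⟩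
    simp [x4v, Pi.single_apply] at h5
  -- apply equivariance with X = h
  have key := hcomm hv hv_mem x4v w hw'
  rw [lie_h_x4] at key
  have key2 : (3:ℝ) • prS w = prS ⁅hv, w⁆ := by
    have : K (prS ((3:ℝ) • x4v)) = prS ⁅hv, w⁆ := key
    rw [map_smul, map_smul, hw'] at this
    exact this
  have hmem : ⁅hv, w⁆ - (3:ℝ) • w ∈ Ssub := by
    rw [← Submodule.Quotient.mk_eq_zero Ssub]
    have : prS (⁅hv, w⁆ - (3:ℝ) • w) = 0 := by
      rw [map_sub, map_smul, ← key2, sub_self]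
    exact this
  rcases (memS _).mp hmem with ⟨c0, c1, c2, c3, c4, -⟩
  rw [G.lie_def] at c0 c1 c2 c3 c4
  simp only [G.sub_apply, G.smul_apply, gb, hv, Pi.single_apply] at c0 c1 c2 c3 c4
  norm_num [show ((0:Fin 9) ≠ 6) from by decide, show ((1:Fin 9) ≠ 6) from by decide,
    show ((2:Fin 9) ≠ 6) from by decide, show ((3:Fin 9) ≠ 6) from by decide,
    show ((4:Fin 9) ≠ 6) from by decide, show ((5:Fin 9) ≠ 6) from by decide,
    show ((7:Fin 9) ≠ 6) from by decide, show ((8:Fin 9) ≠ 6) from by decide] at c0 c1 c2 c3 c4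
  -- hence w ≡ w 5 • x4v mod Ssub
  have hmem2 : w - w 5 • x4v ∈ Ssub := by
    refine (memS _).mpr ⟨?_, ?_, ?_, ?_, ?_, ?_⟩ <;> simp only [G.sub_apply, G.smul_apply] <;>
      simp [G.sub_apply, G.smul_apply, x4v, Pi.single_apply, c0, c1, c2, c3, c4, sub_eq_zero,
        show ((0:Fin 9) ≠ 5) from by decide, show ((1:Fin 9) ≠ 5) from by decide,
        show ((2:Fin 9) ≠ 5) from by decide, show ((3:Fin 9) ≠ 5) from by decide,
        show ((4:Fin 9) ≠ 5) from by decide] <;> linarith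
  have hwq : prS w = w 5 • prS x4v := by
    have : prS (w - w 5 • x4v) = 0 := (Submodule.Quotient.mk_eq_zero Ssub).mpr hmem2
    rw [map_sub, map_smul, sub_eq_zero] at this
    exact this
  -- now compute K (K (prS x4v)) two ways
  have e1 : K (prS w) = -prS x4v := by
    have := LinearMap.congr_fun hK2 (prS x4v)
    simp only [LinearMap.comp_apply, LinearMap.neg_apply, LinearMap.id_apply] at this
    rw [← hw', this]
  have e2 : K (prS w) = (w 5 * w 5) • prS x4v := by
    rw [hwq, map_smul, hw', hwq, smul_smul]
  have : (w 5 * w 5 + 1) • prS x4v = 0 := by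
    rw [add_smul, one_smul, e2.symm.trans e1]
    abel
  rcases smul_eq_zero.mp this with h | h
  · nlinarith [sq_nonneg (w 5)]
  · exact hx4ne h
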